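/- Assume M > (2/(3√3))√(α³/β) and let 0 < ε < M/(2n + 1 + 8n/h² + 2α + 8β). Suppose at time T₁ the state satisfies v_l(T₁) = 0 and |Δ_D x(·,T₁)(l)| ≤ ε for all l ∈ Λ̄. Set T₂ = T₁ + 2√α/(M√β) and define on [T₁, T₂] the control u_l(t) = −(α − β v_l(t)²) v_l(t) − Δ_D x(·,t)(l) + M/2. Then the resulting solution of the controlled discrete Klein–Gordon system satisfies v_l(t) = M(t − T₁)/2 for all l ∈ Λ̄ and t ∈ [T₁, T₂]; in particular v_l(T₂) = √(α/β) for all l, the differences x_{l'}(t) − x_l(t) are constant in t on [T₁, T₂] so |Δ_D x(·,T₂)(l)| ≤ ε, and the control is admissible: |u_l(t)| ≤ M/2 + ε < M for all l, t ∈ [T₁, T₂]. -/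

import Mathlib

open Finset Filter

/-- The discrete torus `(ℤ/Dℤ)^n`. -/
abbrev Site (D n : ℕ) : Type := Fin n → ZMod D

/-- Sum over the `2n` neighbors `l ± e_k` of a site `l`. -/
noncomputable def nbrSum {D n : ℕ} (g : Site D n → ℝ) (l : Site D n) : ℝ :=
  ∑ k : Fin n, (g (Function.update l k (l k + 1)) + g (Function.update l k (l k - 1)))

/-- The discrete Laplacian `Δ_D f(l) = Σ_{l'∼l} (f(l') − f(l))/h²` with `h = 1/D`. -/
noncomputable def lap {D n : ℕ} (f : Site D n → ℝ) (l : Site D n) : ℝ :=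
  nbrSum (fun l' => (f l' - f l) / ((1 : ℝ) / (D : ℝ)) ^ 2) l


set_option maxHeartbeats 1000000 in
/-- The acceleration stage: starting from rest with small discrete Laplacian at
time `T₁`, the feedback control `u = −(α − βv²)v − Δ_D x + M/2` drives all
velocities to `v̄ = √(α/β)` at `T₂ = T₁ + 2√α/(M√β)`, keeps the discrete
gradients frozen, and is admissible with `|u| ≤ M/2 + ε < M`. -/
theorem acceleration_stage (D n : ℕ) [NeZero D] (hn : 1 ≤ n)
    (α β M : ℝ) (hα : 0 < α) (hβ : 0 < β)
    (hM : 2 / (3 * Real.sqrt 3) * Real.sqrt (α ^ 3 / β) < M)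
    (ε : ℝ) (hε₀ : 0 < ε)
    (hε : ε < M / (2 * n + 1 + 8 * n / ((1 : ℝ) / (D : ℝ)) ^ 2 + 2 * α + 8 * β))
    (T₁ T₂ : ℝ) (hT₂ : T₂ = T₁ + 2 * Real.sqrt α / (M * Real.sqrt β))
    (x v u : Site D n → ℝ → ℝ)
    (hv₀ : ∀ l, v l T₁ = 0)
    (hlap₀ : ∀ l, |lap (fun l' => x l' T₁) l| ≤ ε)
    (hu : ∀ l t,
      u l t = -((α - β * (v l t) ^ 2) * v l t) - lap (fun l' => x l' t) l + M / 2)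
    (hx : ∀ l, ∀ t ∈ Set.Icc T₁ T₂,
      HasDerivWithinAt (x l) (v l t) (Set.Icc T₁ T₂) t)
    (hveq : ∀ l, ∀ t ∈ Set.Icc T₁ T₂,
      HasDerivWithinAt (v l)
        (lap (fun l' => x l' t) l + (α - β * (v l t) ^ 2) * v l t + u l t)
        (Set.Icc T₁ T₂) t) :
    (∀ l : Site D n, ∀ t ∈ Set.Icc T₁ T₂, v l t = M * (t - T₁) / 2) ∧
    (∀ l : Site D n, v l T₂ = Real.sqrt (α / β)) ∧
    (∀ l l' : Site D n, ∀ t ∈ Set.Icc T₁ T₂, x l' t - x l t = x l' T₁ - x l T₁) ∧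
    (∀ l : Site D n, |lap (fun l' => x l' T₂) l| ≤ ε) ∧
    (∀ l : Site D n, ∀ t ∈ Set.Icc T₁ T₂, |u l t| ≤ M / 2 + ε) ∧
    M / 2 + ε < M := by
  have h3 : (0:ℝ) < Real.sqrt 3 := Real.sqrt_pos.2 (by norm_num)
  have hab : (0:ℝ) < α ^ 3 / β := by positivity
  have hR : (0:ℝ) < 2 / (3 * Real.sqrt 3) * Real.sqrt (α ^ 3 / β) := by positivity
  have hM0 : (0:ℝ) < M := hR.trans hM
  have hsβ : (0:ℝ) < Real.sqrt β := Real.sqrt_pos.2 hβ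
  have hsα : (0:ℝ) < Real.sqrt α := Real.sqrt_pos.2 hα
  have hT12 : T₁ ≤ T₂ := by
    rw [hT₂]
    have : 0 ≤ 2 * Real.sqrt α / (M * Real.sqrt β) := by positivity
    linarith
  have hconv : Convex ℝ (Set.Icc T₁ T₂) := convex_Icc _ _
  have hT1mem : T₁ ∈ Set.Icc T₁ T₂ := ⟨le_refl _, hT12⟩
  have hT2mem : T₂ ∈ Set.Icc T₁ T₂ := ⟨hT12, le_refl _⟩
  -- Step 1 : v l t = M (t - T₁) / 2
  have hv : ∀ l : Site D n, ∀ t ∈ Set.Icc T₁ T₂, v l t = M * (t - T₁) / 2 := by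
    intro l t ht
    have hw : ∀ s ∈ Set.Icc T₁ T₂,
        HasDerivWithinAt (fun τ => v l τ - M * (τ - T₁) / 2) 0 (Set.Icc T₁ T₂) s := by
      intro s hs
      have h1 := hveq l s hs
      rw [hu l s] at h1
      have h1' : HasDerivWithinAt (v l) (M / 2) (Set.Icc T₁ T₂) s := by
        convert h1 using 1; ring
      have h2 : HasDerivWithinAt (fun τ => M * (τ - T₁) / 2) (M / 2) (Set.Icc T₁ T₂) s := by
        have := ((((hasDerivAt_id s).sub_const T₁).const_mul M).div_const 2).hasDerivWithinAt
          (s := Set.Icc T₁ T₂)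
        exact this.congr_deriv (by ring)
      have := h1'.sub h2
      simpa [Pi.sub_def] using this
    have key := hconv.norm_image_sub_le_of_norm_hasDerivWithin_le (C := 0) hw
      (fun s _ => by simp) hT1mem ht
    have hz : v l T₁ - M * (T₁ - T₁) / 2 = 0 := by rw [hv₀ l]; ring
    rw [hz] at key
    simp only [zero_mul, sub_zero] at key
    have : |v l t - M * (t - T₁) / 2| ≤ 0 := by simpa [Real.norm_eq_abs] using key
    have := abs_nonneg (v l t - M * (t - T₁) / 2)
    have h0 : |v l t - M * (t - T₁) / 2| = 0 := le_antisymm ‹_› ‹_›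
    have := abs_eq_zero.1 h0
    linarith
  -- Step 3 : differences frozen
  have hdiff : ∀ l l' : Site D n, ∀ t ∈ Set.Icc T₁ T₂,
      x l' t - x l t = x l' T₁ - x l T₁ := by
    intro l l' t ht
    have hw : ∀ s ∈ Set.Icc T₁ T₂,
        HasDerivWithinAt (fun τ => x l' τ - x l τ) 0 (Set.Icc T₁ T₂) s := by
      intro s hs
      have := (hx l' s hs).sub (hx l s hs)
      rw [hv l' s hs, hv l s hs] at this
      simpa [Pi.sub_def] using this
    have key := hconv.norm_image_sub_le_of_norm_hasDerivWithin_le (C := 0) hw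
      (fun s _ => by simp) hT1mem ht
    simp only [zero_mul] at key
    have h0 : |x l' t - x l t - (x l' T₁ - x l T₁)| ≤ 0 := by
      simpa [Real.norm_eq_abs] using key
    have := abs_nonneg (x l' t - x l t - (x l' T₁ - x l T₁))
    have := abs_eq_zero.1 (le_antisymm h0 this)
    linarith
  -- Laplacian frozen
  have hlapfreeze : ∀ t ∈ Set.Icc T₁ T₂, ∀ l : Site D n,
      lap (fun l' => x l' t) l = lap (fun l' => x l' T₁) l := by
    intro t ht l
    simp only [lap, nbrSum]
    refine Finset.sum_congr rfl fun k _ => ?_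
    rw [hdiff l (Function.update l k (l k + 1)) t ht,
        hdiff l (Function.update l k (l k - 1)) t ht]
  have hlapbound : ∀ t ∈ Set.Icc T₁ T₂, ∀ l : Site D n,
      |lap (fun l' => x l' t) l| ≤ ε := by
    intro t ht l
    rw [hlapfreeze t ht l]; exact hlap₀ l
  -- value at T₂
  have hvT2 : ∀ l : Site D n, v l T₂ = Real.sqrt (α / β) := by
    intro l
    rw [hv l T₂ hT2mem, hT₂, Real.sqrt_div hα.le]
    field_simp
    ring
  -- nonlinear term bound
  have hnl : ∀ w : ℝ, 0 ≤ w → β * w ^ 2 ≤ α →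
      0 ≤ (α - β * w ^ 2) * w ∧
      (α - β * w ^ 2) * w ≤ 2 / (3 * Real.sqrt 3) * Real.sqrt (α ^ 3 / β) := by
    intro w hw hw2
    have hP0 : 0 ≤ (α - β * w ^ 2) * w := mul_nonneg (by linarith) hw
    refine ⟨hP0, ?_⟩
    set P := (α - β * w ^ 2) * w with hPdef
    set R := 2 / (3 * Real.sqrt 3) * Real.sqrt (α ^ 3 / β) with hRdef
    have hR0 : 0 ≤ R := le_of_lt hR
    have h3sq : Real.sqrt 3 ^ 2 = 3 := Real.sq_sqrt (by norm_num)
    have habsq : Real.sqrt (α ^ 3 / β) ^ 2 = α ^ 3 / β := Real.sq_sqrt (le_of_lt hab)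
    have hRsq : R ^ 2 = 4 / 27 * (α ^ 3 / β) := by
      rw [hRdef, mul_pow, div_pow, mul_pow, h3sq, habsq]; ring
    have hs : β * w ^ 2 ≥ 0 := by positivity
    have hkey : (α - β * w ^ 2) ^ 2 * (β * w ^ 2) ≤ 4 * α ^ 3 / 27 := by
      nlinarith [mul_nonneg (sq_nonneg (3 * (β * w ^ 2) - α))
        (by linarith : (0:ℝ) ≤ 4 * α - 3 * (β * w ^ 2))]
    have hPsq : P ^ 2 ≤ R ^ 2 := by
      have hPexp : P ^ 2 = (α - β * w ^ 2) ^ 2 * (β * w ^ 2) / β := by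
        rw [hPdef]; field_simp
      have hRexp : R ^ 2 = (4 * α ^ 3 / 27) / β := by rw [hRsq]; ring
      rw [hPexp, hRexp]
      gcongr
    calc P = Real.sqrt (P ^ 2) := (Real.sqrt_sq hP0).symm
      _ ≤ Real.sqrt (R ^ 2) := Real.sqrt_le_sqrt hPsq
      _ = R := Real.sqrt_sq hR0
  -- velocity stays in [0, sqrt(α/β)]
  have hvrange : ∀ l : Site D n, ∀ t ∈ Set.Icc T₁ T₂,
      0 ≤ v l t ∧ β * (v l t) ^ 2 ≤ α := by
    intro l t ht
    rw [hv l t ht]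
    constructor
    · have : 0 ≤ t - T₁ := by linarith [ht.1]
      positivity
    · have h1 : M * (t - T₁) / 2 ≤ M * (T₂ - T₁) / 2 := by
        have := ht.2; nlinarith
      have h2 : M * (T₂ - T₁) / 2 = Real.sqrt α / Real.sqrt β := by
        rw [hT₂]; field_simp; ring
      have h3 : 0 ≤ M * (t - T₁) / 2 := by
        have : 0 ≤ t - T₁ := by linarith [ht.1]
        positivity
      have h4 : (M * (t - T₁) / 2) ^ 2 ≤ (Real.sqrt α / Real.sqrt β) ^ 2 := by
        apply pow_le_pow_left₀ h3 (by rw [← h2]; exact h1)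
      have h5 : (Real.sqrt α / Real.sqrt β) ^ 2 = α / β := by
        rw [div_pow, Real.sq_sqrt hα.le, Real.sq_sqrt hβ.le]
      rw [h5] at h4
      rw [le_div_iff₀ hβ] at h4
      nlinarith
  -- admissibility
  have hK : (2:ℝ) < 2 * n + 1 + 8 * n / ((1 : ℝ) / (D : ℝ)) ^ 2 + 2 * α + 8 * β := by
    have hD : (0:ℝ) < (D:ℝ) := by
      have := NeZero.pos D
      exact_mod_cast this
    have hn' : (1:ℝ) ≤ (n:ℝ) := by exact_mod_cast hn
    have h1 : (0:ℝ) ≤ 8 * n / ((1 : ℝ) / (D : ℝ)) ^ 2 := by positivity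
    nlinarith
  have hεM : ε < M / 2 := by
    have := div_lt_div_of_pos_left hM0 (by norm_num : (0:ℝ) < 2) hK
    linarith
  refine ⟨hv, hvT2, fun l l' t ht => hdiff l l' t ht, fun l => hlapbound T₂ hT2mem l,
    ?_, by linarith⟩
  intro l t ht
  rw [hu l t]
  obtain ⟨hw0, hw2⟩ := hvrange l t ht
  obtain ⟨hP0, hP1⟩ := hnl (v l t) hw0 hw2
  have hPM : (α - β * (v l t) ^ 2) * v l t < M := lt_of_le_of_lt hP1 hM
  obtain ⟨hlb1, hlb2⟩ := abs_le.1 (hlapbound t ht l)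
  set L := lap (fun l' => x l' t) l with hL
  set P := (α - β * (v l t) ^ 2) * v l t with hP
  clear_value L P
  rw [abs_le]
  constructor
  · linarith
  · linarith
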